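/- Let f, g: R^n → R be μ-strongly convex (with μ ≥ 0, μ + 1/η > 0), η > 0, and let x* = prox_{η,f}(x) = argmin_u { f(u) + ‖u-x‖²/(2η) } and y* = prox_{η,g}(x). Then (μ + 1/η)‖x* - y*‖² ≤ (f(y*) - g(y*)) + (g(x*) - f(x*)). In other words, the squared distance between the proximal points of two strongly convex functions at the same base point is bounded by the sum of the cross function-value gaps. -/

import Mathlib

open Filter Set

private lemma prox_aux_limit {C G : ℝ} (h : ∀ a : ℝ, 0 ≤ a → a < 1 → a * C ≤ G) : C ≤ G := by
  have ht : Tendsto (fun a : ℝ => a * C) (nhdsWithin 1 (Set.Iio 1)) (nhds C) := by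
    simpa using ((continuous_mul_const C).tendsto (1 : ℝ)).mono_left
      nhdsWithin_le_nhds
  refine le_of_tendsto ht ?_
  filter_upwards [Ioo_mem_nhdsLT_of_mem (by norm_num : (1:ℝ) ∈ Set.Ioc 0 1)] with a ha
  exact h a ha.1.le ha.2

private lemma prox_norm_combo {E : Type*} [NormedAddCommGroup E] [InnerProductSpace ℝ E]
    (u v w : E) {a b : ℝ} (hab : a + b = 1) :
    ‖(a • u + b • v) - w‖ ^ 2 = a * ‖u - w‖ ^ 2 + b * ‖v - w‖ ^ 2 - a * b * ‖u - v‖ ^ 2 := by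
  have e1 : (a • u + b • v) - w = a • (u - w) + b • (v - w) := by
    have hw : a • w + b • w = w := by rw [← add_smul, hab, one_smul]
    conv_lhs => rw [← hw]
    rw [smul_sub, smul_sub]
    abel
  have huv : u - v = (u - w) - (v - w) := by abel
  rw [e1, norm_add_sq_real, real_inner_smul_left, real_inner_smul_right, norm_smul, norm_smul,
    huv, norm_sub_sq_real (u - w) (v - w), Real.norm_eq_abs, Real.norm_eq_abs, mul_pow, mul_pow, sq_abs, sq_abs]
  linear_combination (a * ‖u - w‖ ^ 2 + b * ‖v - w‖ ^ 2) * hab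

private lemma prox_gap {n : ℕ} (μ η : ℝ) (hη : 0 < η)
    (f : EuclideanSpace ℝ (Fin n) → ℝ) (hf : StrongConvexOn Set.univ μ f)
    (x xstar ystar : EuclideanSpace ℝ (Fin n))
    (hx : IsMinOn (fun u => f u + ‖u - x‖ ^ 2 / (2 * η)) Set.univ xstar) :
    (μ + 1 / η) / 2 * ‖xstar - ystar‖ ^ 2 ≤
      (f ystar + ‖ystar - x‖ ^ 2 / (2 * η)) - (f xstar + ‖xstar - x‖ ^ 2 / (2 * η)) := by
  apply prox_aux_limit
  intro a ha0 ha1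
  set b : ℝ := 1 - a with hb
  have hab : a + b = 1 := by ring
  have hb0 : 0 ≤ b := by simp [hb]; linarith
  have hbpos : 0 < b := by simp [hb]; linarith
  have hcvx := hf.2 (Set.mem_univ xstar) (Set.mem_univ ystar) ha0 hb0 hab
  have hnorm := prox_norm_combo xstar ystar x hab
  have hmin := hx (Set.mem_univ (a • xstar + b • ystar))
  simp only [smul_eq_mul] at hcvx hmin
  -- hmin : f xstar + ‖xstar - x‖^2/(2η) ≤ f z + ‖z - x‖^2/(2η)
  have key : f xstar + ‖xstar - x‖ ^ 2 / (2 * η) ≤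
      a * (f xstar + ‖xstar - x‖ ^ 2 / (2 * η)) + b * (f ystar + ‖ystar - x‖ ^ 2 / (2 * η))
        - a * b * ((μ + 1 / η) / 2 * ‖xstar - ystar‖ ^ 2) := by
    have h2 : ‖(a • xstar + b • ystar) - x‖ ^ 2 / (2 * η) =
        a * (‖xstar - x‖ ^ 2 / (2 * η)) + b * (‖ystar - x‖ ^ 2 / (2 * η))
          - a * b * ((1 / η) / 2 * ‖xstar - ystar‖ ^ 2) := by
      rw [hnorm]; field_simp
    calc f xstar + ‖xstar - x‖ ^ 2 / (2 * η) ≤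
        f (a • xstar + b • ystar) + ‖(a • xstar + b • ystar) - x‖ ^ 2 / (2 * η) := hmin
      _ ≤ (a * f xstar + b * f ystar - a * b * (μ / 2 * ‖xstar - ystar‖ ^ 2))
          + (a * (‖xstar - x‖ ^ 2 / (2 * η)) + b * (‖ystar - x‖ ^ 2 / (2 * η))
            - a * b * ((1 / η) / 2 * ‖xstar - ystar‖ ^ 2)) := by
        rw [h2]; exact add_le_add_left hcvx _
      _ = a * (f xstar + ‖xstar - x‖ ^ 2 / (2 * η)) + b * (f ystar + ‖ystar - x‖ ^ 2 / (2 * η))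
          - a * b * ((μ + 1 / η) / 2 * ‖xstar - ystar‖ ^ 2) := by ring
  -- from key, divide by b
  have h3 : b * (a * ((μ + 1 / η) / 2 * ‖xstar - ystar‖ ^ 2)) ≤
      b * ((f ystar + ‖ystar - x‖ ^ 2 / (2 * η)) - (f xstar + ‖xstar - x‖ ^ 2 / (2 * η))) := by
    nlinarith [key]
  have := (mul_le_mul_iff_right₀ hbpos).mp h3
  linarith

theorem prox_distance_bound {n : ℕ} (μ η : ℝ) (hμ : 0 ≤ μ) (hη : 0 < η)
    (hμη : 0 < μ + 1 / η) (f g : EuclideanSpace ℝ (Fin n) → ℝ)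
    (hf : StrongConvexOn Set.univ μ f) (hg : StrongConvexOn Set.univ μ g)
    (hflsc : LowerSemicontinuous f) (hglsc : LowerSemicontinuous g)
    (x xstar ystar : EuclideanSpace ℝ (Fin n))
    (hx : IsMinOn (fun u => f u + ‖u - x‖ ^ 2 / (2 * η)) Set.univ xstar)
    (hy : IsMinOn (fun u => g u + ‖u - x‖ ^ 2 / (2 * η)) Set.univ ystar) :
    (μ + 1 / η) * ‖xstar - ystar‖ ^ 2 ≤ (f ystar - g ystar) + (g xstar - f xstar) := by
  have h1 := prox_gap μ η hη f hf x xstar ystar hx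
  have h2 := prox_gap μ η hη g hg x ystar xstar hy
  have hsymm : ‖ystar - xstar‖ = ‖xstar - ystar‖ := norm_sub_rev _ _
  rw [hsymm] at h2
  linarith
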